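/- Let I be an SPA-ST instance and M a matching in I. Define, for student s_i and project p_j offered by l_k: γ_{ij} = 1 if s_i is unassigned or strictly prefers p_j to M(s_i) (and p_j is acceptable to s_i), else 0; α_{ij} = 1 iff s_i ∉ M(l_k), l_k is full, and l_k weakly prefers its worst assignee in M(l_k) to s_i; β_{ij} = 1 iff s_i ∉ M(p_j), p_j is full, and l_k weakly prefers its worst assignee in M(p_j) to s_i. Then M is stable if and only if for all acceptable pairs (s_i, p_j), γ_{ij} ≤ α_{ij} + β_{ij}. -/

import Mathlib

open scoped Classical
open Finset

/-- An instance of the Student-Project Allocation problem with lecturer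
preferences over students, with ties (SPA-ST).  Preferences are encoded by
rank functions: a lower rank means more preferred; equal ranks encode ties. -/
structure SPAST (S P L : Type) where
  /-- the lecturer offering each project -/
  lec : P → L
  /-- project capacities -/
  cap : P → ℕ
  /-- lecturer capacities -/
  dcap : L → ℕ
  /-- `acc s p` iff student `s` finds project `p` acceptable -/
  acc : S → P → Prop
  /-- student rank function (lower is better); meaningful on acceptable projects -/
  sRank : S → P → ℕ
  /-- lecturer rank function over students (lower is better) -/
  lRank : L → S → ℕ

variable {S P L : Type}

/-- students assigned to a project in `M` -/
noncomputable def projAssignees [Fintype S] (M : S → Option P) (p : P) : Finset S :=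
  Finset.univ.filter (fun s => M s = some p)

/-- students assigned to some project of lecturer `k` in `M` -/
noncomputable def lecAssignees [Fintype S] (I : SPAST S P L) (M : S → Option P) (k : L) :
    Finset S :=
  Finset.univ.filter (fun s => ∃ p, M s = some p ∧ I.lec p = k)

def IsMatching [Fintype S] (I : SPAST S P L) (M : S → Option P) : Prop :=
  (∀ s p, M s = some p → I.acc s p) ∧
  (∀ p, (projAssignees M p).card ≤ I.cap p) ∧
  (∀ k, (lecAssignees I M k).card ≤ I.dcap k)

def ProjFull [Fintype S] (I : SPAST S P L) (M : S → Option P) (p : P) : Prop :=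
  (projAssignees M p).card = I.cap p

def LecFull [Fintype S] (I : SPAST S P L) (M : S → Option P) (k : L) : Prop :=
  (lecAssignees I M k).card = I.dcap k

/-- `s` finds `p` acceptable and is unassigned or strictly prefers `p` to `M(s)`. -/
def WantsToMove (I : SPAST S P L) (M : S → Option P) (s : S) (p : P) : Prop :=
  I.acc s p ∧ (M s = none ∨ ∃ p', M s = some p' ∧ I.sRank s p < I.sRank s p')

/-- `(s, p)` is a blocking pair of `M`. -/
def Blocks [Fintype S] (I : SPAST S P L) (M : S → Option P) (s : S) (p : P) : Prop :=
  WantsToMove I M s p ∧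
  ( (¬ ProjFull I M p ∧ ¬ LecFull I M (I.lec p)) ∨
    (¬ ProjFull I M p ∧ LecFull I M (I.lec p) ∧
      (s ∈ lecAssignees I M (I.lec p) ∨
       ∃ s' ∈ lecAssignees I M (I.lec p), I.lRank (I.lec p) s < I.lRank (I.lec p) s')) ∨
    (ProjFull I M p ∧
       ∃ s' ∈ projAssignees M p, I.lRank (I.lec p) s < I.lRank (I.lec p) s') )

def Stable [Fintype S] (I : SPAST S P L) (M : S → Option P) : Prop :=
  IsMatching I M ∧ ∀ s p, ¬ Blocks I M s p

/-- the number of assigned agents in a matching -/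
noncomputable def msize {A B : Type} [Fintype A] (M : A → Option B) : ℕ :=
  (Finset.univ.filter (fun a => (M a).isSome)).card

lemma proj_sub_aux [Fintype S] (I : SPAST S P L) (M : S → Option P) (p : P) :
    ∀ s', s' ∈ projAssignees M p → s' ∈ lecAssignees I M (I.lec p) := by
  intro s' h
  simp only [projAssignees, Finset.mem_filter, Finset.mem_univ, true_and] at h
  simp only [lecAssignees, Finset.mem_filter, Finset.mem_univ, true_and]
  exact ⟨p, h, rfl⟩

lemma wants_not_mem [Fintype S] (I : SPAST S P L) (M : S → Option P) (s : S) (p : P)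
    (hw : WantsToMove I M s p) : s ∉ projAssignees M p := by
  intro hmem
  simp only [projAssignees, Finset.mem_filter, Finset.mem_univ, true_and] at hmem
  rcases hw.2 with h | ⟨p', hp', hr⟩
  · rw [hmem] at h; exact absurd h (by simp)
  · rw [hmem] at hp'
    have : p = p' := by injection hp'
    subst this; omega

lemma blocks_iff_aux [Fintype S] (I : SPAST S P L) (M : S → Option P) (s : S) (p : P) :
    Blocks I M s p ↔ WantsToMove I M s p ∧
      ¬(s ∉ lecAssignees I M (I.lec p) ∧ LecFull I M (I.lec p) ∧
          ∀ s' ∈ lecAssignees I M (I.lec p),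
            I.lRank (I.lec p) s' ≤ I.lRank (I.lec p) s) ∧
      ¬(s ∉ projAssignees M p ∧ ProjFull I M p ∧
          ∀ s' ∈ projAssignees M p,
            I.lRank (I.lec p) s' ≤ I.lRank (I.lec p) s) := by
  constructor
  · rintro ⟨hw, hc⟩
    refine ⟨hw, ?_, ?_⟩
    · rintro ⟨hnl, hlf, hall⟩
      rcases hc with ⟨_, h⟩ | ⟨_, _, h⟩ | ⟨_, s', hs', hr⟩
      · exact h hlf
      · rcases h with h | ⟨s', hs', hr⟩
        · exact hnl h
        · have := hall s' hs'; omega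
      · have := hall s' (proj_sub_aux I M p s' hs'); omega
    · rintro ⟨hnp, hpf, hall⟩
      rcases hc with ⟨h, _⟩ | ⟨h, _⟩ | ⟨_, s', hs', hr⟩
      · exact h hpf
      · exact h hpf
      · have := hall s' hs'; omega
  · rintro ⟨hw, hA, hB⟩
    have hns : s ∉ projAssignees M p := wants_not_mem I M s p hw
    refine ⟨hw, ?_⟩
    by_cases hpf : ProjFull I M p
    · right; right
      refine ⟨hpf, ?_⟩
      by_contra hcon
      apply hB
      refine ⟨hns, hpf, ?_⟩
      intro s' hs'
      by_contra hlt
      exact hcon ⟨s', hs', by omega⟩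
    · by_cases hlf : LecFull I M (I.lec p)
      · right; left
        refine ⟨hpf, hlf, ?_⟩
        by_contra hcon
        push_neg at hcon
        apply hA
        refine ⟨hcon.1, hlf, ?_⟩
        intro s' hs'
        have := hcon.2 s' hs'
        omega
      · exact Or.inl ⟨hpf, hlf⟩

/-- With the 0/1 indicators `γ`, `α`, `β` defined as in the IP
formulation, a matching `M` is stable iff `γ_{ij} ≤ α_{ij} + β_{ij}` for all
acceptable pairs `(s_i, p_j)`. -/
theorem stmt6 [Fintype S] (I : SPAST S P L) (M : S → Option P) (hM : IsMatching I M)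
    (γ α β : S → P → ℕ)
    (hγ : ∀ s p, γ s p = if WantsToMove I M s p then 1 else 0)
    (hα : ∀ s p, α s p =
      if (s ∉ lecAssignees I M (I.lec p) ∧ LecFull I M (I.lec p) ∧
          ∀ s' ∈ lecAssignees I M (I.lec p),
            I.lRank (I.lec p) s' ≤ I.lRank (I.lec p) s) then 1 else 0)
    (hβ : ∀ s p, β s p =
      if (s ∉ projAssignees M p ∧ ProjFull I M p ∧
          ∀ s' ∈ projAssignees M p,
            I.lRank (I.lec p) s' ≤ I.lRank (I.lec p) s) then 1 else 0) :
    Stable I M ↔ ∀ s p, I.acc s p → γ s p ≤ α s p + β s p := by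
  constructor
  · rintro ⟨_, hst⟩ s p hacc
    rw [hγ, hα, hβ]
    by_cases hw : WantsToMove I M s p
    · have hb := hst s p
      rw [blocks_iff_aux] at hb
      have hAB : ¬(¬(s ∉ lecAssignees I M (I.lec p) ∧ LecFull I M (I.lec p) ∧
          ∀ s' ∈ lecAssignees I M (I.lec p),
            I.lRank (I.lec p) s' ≤ I.lRank (I.lec p) s) ∧
        ¬(s ∉ projAssignees M p ∧ ProjFull I M p ∧
          ∀ s' ∈ projAssignees M p,
            I.lRank (I.lec p) s' ≤ I.lRank (I.lec p) s)) := fun h => hb ⟨hw, h⟩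
      rw [if_pos hw]
      split_ifs with h1 h2 h3 <;>
        first
        | omega
        | exact absurd (by constructor <;> assumption) hAB
    · rw [if_neg hw]; omega
  · intro h
    refine ⟨hM, fun s p hb => ?_⟩
    rw [blocks_iff_aux] at hb
    obtain ⟨hw, hA, hB⟩ := hb
    have := h s p hw.1
    rw [hγ, hα, hβ, if_pos hw, if_neg hA, if_neg hB] at this
    omega
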